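/- Equality case of the functional highest-density optimality: with λ Lebesgue measure on ℝ^d, f a probability density, α ∈ (0,1), τ_α > 0, C^HD_α := { y : f(y) ≥ τ_α } satisfying ∫_{C^HD_α} f dλ = 1 − α, and assuming additionally λ({ y : f(y) = τ_α }) = 0, if a measurable function g : ℝ^d → [0,1] satisfies ∫ g·f dλ ≥ 1 − α and ∫ g dλ = λ(C^HD_α), then g = 1_{C^HD_α} λ-almost everywhere. -/

import Mathlib

open MeasureTheory

/-- Equality case of the functional highest-density optimality: if moreover the level
set `{ y : f y = τ }` is Lebesgue-null, a measurable `g : ℝ^d → [0,1]` with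
`∫ g·f dλ ≥ 1 - α` and `∫ g dλ = λ(C^HD_α)` equals the indicator of `C^HD_α`
λ-almost everywhere. -/
theorem stmt7 (d : ℕ) (f : (Fin d → ℝ) → ℝ)
    (hf_meas : Measurable f) (hf_nonneg : ∀ y, 0 ≤ f y)
    (hf_int : Integrable f) (hf_prob : ∫ y, f y = 1)
    (α τ : ℝ) (hα : α ∈ Set.Ioo (0 : ℝ) 1) (hτ : 0 < τ)
    (hHD : ∫ y in {y | τ ≤ f y}, f y = 1 - α)
    (hlevel : volume {y | f y = τ} = 0)
    (g : (Fin d → ℝ) → ℝ) (hg_meas : Measurable g)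
    (hg01 : ∀ y, g y ∈ Set.Icc (0 : ℝ) 1)
    (hgmass : 1 - α ≤ ∫ y, g y * f y)
    (hgvol : ∫⁻ y, ENNReal.ofReal (g y) = volume {y | τ ≤ f y}) :
    ∀ᵐ y ∂(volume : Measure (Fin d → ℝ)),
      g y = Set.indicator {y | τ ≤ f y} (fun _ => (1 : ℝ)) y := by
  set C : Set (Fin d → ℝ) := {y | τ ≤ f y} with hC
  have hCmeas : MeasurableSet C := hf_meas measurableSet_Ici
  -- finiteness of volume C
  have hfin : volume C ≠ ⊤ := by
    intro htop
    have h1 : ∫⁻ y in C, ENNReal.ofReal τ ≤ ∫⁻ y in C, ENNReal.ofReal (f y) := by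
      apply setLIntegral_mono hf_meas.ennreal_ofReal
      intro y hy
      exact ENNReal.ofReal_le_ofReal hy
    have h2 : ∫⁻ y in C, ENNReal.ofReal (f y) ≤ ∫⁻ y, ENNReal.ofReal (f y) :=
      setLIntegral_le_lintegral _ _
    have h3 : ∫⁻ y, ENNReal.ofReal (f y) = ENNReal.ofReal 1 := by
      rw [← hf_prob]
      exact (integral_eq_lintegral_of_nonneg_ae (Filter.Eventually.of_forall hf_nonneg)
        hf_int.aestronglyMeasurable ▸ (ENNReal.ofReal_toReal (by
          have := hf_int.hasFiniteIntegral
          rw [hasFiniteIntegral_iff_ofReal (Filter.Eventually.of_forall hf_nonneg)] at this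
          exact this.ne))).symm
    rw [setLIntegral_const, htop, ENNReal.mul_top (by simpa using hτ)] at h1
    have := le_trans h1 (le_trans h2 h3.le)
    simp at this
  -- ∫⁻ of g compares: g integrable
  have hgnorm : ∀ y, (‖g y‖₊ : ENNReal) = ENNReal.ofReal (g y) := by
    intro y
    rw [← enorm_eq_nnnorm, ← ofReal_norm, Real.norm_of_nonneg (hg01 y).1]
  have hg_int : Integrable g := by
    refine ⟨hg_meas.aestronglyMeasurable, ?_⟩
    show (∫⁻ y, (‖g y‖₊ : ENNReal)) < ⊤
    simp_rw [hgnorm, hgvol]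
    exact hfin.lt_top
  have hg_integral : ∫ y, g y = (volume C).toReal := by
    rw [integral_eq_lintegral_of_nonneg_ae (Filter.Eventually.of_forall fun y => (hg01 y).1)
      hg_meas.aestronglyMeasurable, hgvol]
  -- integrability pieces
  have hind_int : Integrable (C.indicator (fun _ => (1:ℝ))) := by
    rw [integrable_indicator_iff hCmeas]
    exact integrableOn_const hfin
  have hind_integral : ∫ y, C.indicator (fun _ => (1:ℝ)) y = (volume C).toReal := by
    rw [integral_indicator hCmeas]
    simp
    rfl
  have hindf_int : Integrable (fun y => C.indicator (fun _ => (1:ℝ)) y * f y) := by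
    have : (fun y => C.indicator (fun _ => (1:ℝ)) y * f y) = C.indicator f := by
      ext y
      by_cases hy : y ∈ C <;> simp [Set.indicator_of_mem, Set.indicator_of_notMem, hy]
    rw [this]
    exact hf_int.indicator hCmeas
  have hindf_integral : ∫ y, C.indicator (fun _ => (1:ℝ)) y * f y = 1 - α := by
    have : (fun y => C.indicator (fun _ => (1:ℝ)) y * f y) = C.indicator f := by
      ext y
      by_cases hy : y ∈ C <;> simp [Set.indicator_of_mem, Set.indicator_of_notMem, hy]
    rw [this, integral_indicator hCmeas, hHD]
  have hgf_int : Integrable (fun y => g y * f y) := by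
    refine hf_int.mono' (hg_meas.mul hf_meas).aestronglyMeasurable ?_
    filter_upwards with y
    rw [Real.norm_of_nonneg (mul_nonneg (hg01 y).1 (hf_nonneg y))]
    nlinarith [(hg01 y).1, (hg01 y).2, hf_nonneg y]
  -- define h
  set h : (Fin d → ℝ) → ℝ :=
    fun y => (C.indicator (fun _ => (1:ℝ)) y - g y) * (f y - τ) with hh
  have h_nonneg : ∀ y, 0 ≤ h y := by
    intro y
    by_cases hy : y ∈ C
    · have hfy : τ ≤ f y := hy
      simp only [hh, Set.indicator_of_mem hy]
      nlinarith [(hg01 y).2]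
    · have hfy : f y < τ := not_le.1 hy
      simp only [hh, Set.indicator_of_notMem hy]
      nlinarith [(hg01 y).1]
  have h_eq : h = fun y => (C.indicator (fun _ => (1:ℝ)) y * f y - g y * f y)
      - (τ * C.indicator (fun _ => (1:ℝ)) y - τ * g y) := by
    ext y; simp only [hh]; ring
  have h_int : Integrable h := by
    rw [h_eq]
    exact ((hindf_int.sub hgf_int).sub ((hind_int.const_mul τ).sub (hg_int.const_mul τ)))
  have h_integral_le : ∫ y, h y ≤ 0 := by
    have hA : Integrable (fun y => C.indicator (fun _ => (1:ℝ)) y * f y - g y * f y) :=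
      hindf_int.sub hgf_int
    have hB : Integrable (fun y => τ * C.indicator (fun _ => (1:ℝ)) y - τ * g y) :=
      (hind_int.const_mul τ).sub (hg_int.const_mul τ)
    simp only [h_eq]
    rw [integral_sub hA hB, integral_sub hindf_int hgf_int,
      integral_sub (hind_int.const_mul τ) (hg_int.const_mul τ),
      integral_const_mul, integral_const_mul, hindf_integral, hind_integral, hg_integral]
    linarith
  have h_zero : ∀ᵐ y ∂(volume : Measure (Fin d → ℝ)), h y = 0 := by
    have := (integral_eq_zero_iff_of_nonneg h_nonneg h_int).1
      (le_antisymm h_integral_le (integral_nonneg h_nonneg))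
    filter_upwards [this] with y hy using hy
  have h_ne : ∀ᵐ y ∂(volume : Measure (Fin d → ℝ)), f y ≠ τ := by
    rw [ae_iff]
    simpa using hlevel
  filter_upwards [h_zero, h_ne] with y hy hne
  have hsub : f y - τ ≠ 0 := sub_ne_zero.2 hne
  have := mul_eq_zero.1 hy
  rcases this with h1 | h2
  · linarith [sub_eq_zero.1 h1]
  · exact absurd h2 hsub
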